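/- Let S be a positive irrational real number. Let (r_i)_{i<p}, (t_j)_{j<q}, (r'_i)_{i<p'}, (t'_j)_{j<q'} be finite families of positive integers with p + q ≥ 1, and suppose that Σ_i r_i + S·Σ_j t_j ≥ Σ_i r'_i + S·Σ_j t'_j. Then Σ_i (r_i + ⌈r_i/S⌉) + Σ_j (t_j + ⌈t_j·S⌉) ≥ 1 + Σ_i (r'_i + ⌊r'_i/S⌋) + Σ_j (t'_j + ⌊t'_j·S⌋). -/

import Mathlib

/-- Arithmetic content of Proposition 3.3(e): nonnegativity of the index of a curve
in the symplectization of `∂E(1,S)` with positive ends `γ₁^{rᵢ}, γ₂^{tⱼ}` and negative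
ends `γ₁^{r'ᵢ}, γ₂^{t'ⱼ}`, given positivity of its area. -/
theorem stmt_4 (S : ℝ) (hSpos : 0 < S) (hSirr : Irrational S)
    (p q p' q' : ℕ) (r : Fin p → ℕ) (t : Fin q → ℕ) (r' : Fin p' → ℕ) (t' : Fin q' → ℕ)
    (hr : ∀ i, 0 < r i) (ht : ∀ j, 0 < t j) (hr' : ∀ i, 0 < r' i) (ht' : ∀ j, 0 < t' j)
    (hpq : 1 ≤ p + q)
    (harea : (∑ i, (r i : ℝ)) + S * (∑ j, (t j : ℝ))
      ≥ (∑ i, (r' i : ℝ)) + S * (∑ j, (t' j : ℝ))) :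
    (∑ i, ((r i : ℤ) + ⌈(r i : ℝ) / S⌉)) + (∑ j, ((t j : ℤ) + ⌈(t j : ℝ) * S⌉))
      ≥ 1 + (∑ i, ((r' i : ℤ) + ⌊(r' i : ℝ) / S⌋))
          + (∑ j, ((t' j : ℤ) + ⌊(t' j : ℝ) * S⌋)) := by
  set L : ℤ := (∑ i, ((r i : ℤ) + ⌈(r i : ℝ) / S⌉)) + (∑ j, ((t j : ℤ) + ⌈(t j : ℝ) * S⌉)) with hLdef
  set R : ℤ := (∑ i, ((r' i : ℤ) + ⌊(r' i : ℝ) / S⌋)) + (∑ j, ((t' j : ℤ) + ⌊(t' j : ℝ) * S⌋)) with hRdef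
  suffices h : (R : ℝ) < (L : ℝ) by
    have : R < L := by exact_mod_cast h
    omega
  -- strict irrationality facts
  have hceil_r : ∀ i, (r i : ℝ) / S < (⌈(r i : ℝ) / S⌉ : ℝ) := by
    intro i
    have hirr : Irrational ((r i : ℝ) / S) := hSirr.natCast_div (hr i).ne'
    exact lt_of_le_of_ne (Int.le_ceil _) (fun h => hirr ⟨(⌈(r i : ℝ) / S⌉ : ℚ), by push_cast; exact h.symm⟩)
  have hceil_t : ∀ j, (t j : ℝ) * S < (⌈(t j : ℝ) * S⌉ : ℝ) := by
    intro j
    have hirr : Irrational ((t j : ℝ) * S) := by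
      rw [show ((t j : ℝ)) * S = ((t j : ℕ) : ℝ) * S by norm_num]
      exact hSirr.natCast_mul (ht j).ne'
    exact lt_of_le_of_ne (Int.le_ceil _) (fun h => hirr ⟨(⌈(t j : ℝ) * S⌉ : ℚ), by push_cast; exact h.symm⟩)
  -- bound R above by the real value
  have hR : (R : ℝ) ≤ (∑ i, ((r' i : ℝ) + (r' i : ℝ) / S)) + (∑ j, ((t' j : ℝ) + (t' j : ℝ) * S)) := by
    rw [hRdef]
    push_cast
    gcongr with i _ j _
    · exact Int.floor_le _
    · exact Int.floor_le _
  -- middle real inequality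
  have hmid : (∑ i, ((r' i : ℝ) + (r' i : ℝ) / S)) + (∑ j, ((t' j : ℝ) + (t' j : ℝ) * S))
      ≤ (∑ i, ((r i : ℝ) + (r i : ℝ) / S)) + (∑ j, ((t j : ℝ) + (t j : ℝ) * S)) := by
    have h2 : (∑ i, (r' i : ℝ)) / S + (∑ j, (t' j : ℝ)) ≤ (∑ i, (r i : ℝ)) / S + (∑ j, (t j : ℝ)) := by
      rw [div_add' _ _ _ hSpos.ne', div_add' _ _ _ hSpos.ne',
        div_le_div_iff_of_pos_right hSpos]
      linarith [harea]
    have e1 : ∀ (n : ℕ) (f : Fin n → ℕ), (∑ i, ((f i : ℝ) + (f i : ℝ) / S))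
        = (∑ i, (f i : ℝ)) + (∑ i, (f i : ℝ)) / S := by
      intro n f
      rw [Finset.sum_add_distrib, Finset.sum_div]
    have e2 : ∀ (n : ℕ) (f : Fin n → ℕ), (∑ i, ((f i : ℝ) + (f i : ℝ) * S))
        = (∑ i, (f i : ℝ)) + (∑ i, (f i : ℝ)) * S := by
      intro n f
      rw [Finset.sum_add_distrib, Finset.sum_mul]
    rw [e1, e1, e2, e2]
    linarith [harea]
  -- strict upper step to L
  have hL : (∑ i, ((r i : ℝ) + (r i : ℝ) / S)) + (∑ j, ((t j : ℝ) + (t j : ℝ) * S)) < (L : ℝ) := by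
    rw [hLdef]
    push_cast
    have hr_le : (∑ i, ((r i : ℝ) + (r i : ℝ) / S)) ≤ ∑ i, ((r i : ℝ) + (⌈(r i : ℝ) / S⌉ : ℝ)) := by
      gcongr with i _
      exact (hceil_r i).le
    have ht_le : (∑ j, ((t j : ℝ) + (t j : ℝ) * S)) ≤ ∑ j, ((t j : ℝ) + (⌈(t j : ℝ) * S⌉ : ℝ)) := by
      gcongr with j _
      exact (hceil_t j).le
    rcases Nat.lt_or_ge 0 p with hp | hp
    · have hr_lt : (∑ i, ((r i : ℝ) + (r i : ℝ) / S)) < ∑ i, ((r i : ℝ) + (⌈(r i : ℝ) / S⌉ : ℝ)) := by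
        apply Finset.sum_lt_sum_of_nonempty
        · exact Finset.univ_nonempty_iff.mpr ⟨⟨0, hp⟩⟩
        · intro i _
          exact add_lt_add_right (hceil_r i) _
      linarith
    · have hq : 0 < q := by omega
      have ht_lt : (∑ j, ((t j : ℝ) + (t j : ℝ) * S)) < ∑ j, ((t j : ℝ) + (⌈(t j : ℝ) * S⌉ : ℝ)) := by
        apply Finset.sum_lt_sum_of_nonempty
        · exact Finset.univ_nonempty_iff.mpr ⟨⟨0, hq⟩⟩
        · intro j _
          exact add_lt_add_right (hceil_t j) _
      linarith
  linarith
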